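/- Let a ≤ b ≤ c be real numbers and let f_1,…,f_n : [a,c] → ℝ be continuous functions. Then ∫_{a≤t_1≤⋯≤t_n≤c} ∏_{i=1}^n f_i(t_i) dt_1⋯dt_n = Σ_{j=0}^{n} ( ∫_{a≤t_1≤⋯≤t_j≤b} ∏_{i=1}^{j} f_i(t_i) dt_1⋯dt_j ) · ( ∫_{b≤t_{j+1}≤⋯≤t_n≤c} ∏_{i=j+1}^{n} f_i(t_i) dt_{j+1}⋯dt_n ), where the empty integrals (j = 0 or j = n) are taken to be 1. (This is the composition-of-paths formula for iterated integrals.) -/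

import Mathlib

open MeasureTheory Set

/-- The closed ordered simplex u ≤ t₁ ≤ ⋯ ≤ t_m ≤ v. -/
def closedSimplex (m : ℕ) (u v : ℝ) : Set (Fin m → ℝ) :=
  {t | (∀ i, u ≤ t i ∧ t i ≤ v) ∧ ∀ i j : Fin m, i ≤ j → t i ≤ t j}

/-- The iterated integral `∫_{u ≤ t₁ ≤ ⋯ ≤ t_m ≤ v} ∏ᵢ fᵢ(tᵢ) dt₁⋯dt_m`.
For `m = 0` this equals `1`. -/
noncomputable def iterInt (m : ℕ) (u v : ℝ) (f : Fin m → ℝ → ℝ) : ℝ :=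
  ∫ t in closedSimplex m u v, ∏ i, f i (t i)

lemma isClosed_closedSimplex (m : ℕ) (u v : ℝ) : IsClosed (closedSimplex m u v) := by
  have h : closedSimplex m u v =
      (⋂ i, ({t : Fin m → ℝ | u ≤ t i} ∩ {t | t i ≤ v})) ∩
      ⋂ i, ⋂ j, ⋂ (_ : i ≤ j), {t : Fin m → ℝ | t i ≤ t j} := by
    ext t
    simp only [closedSimplex, mem_setOf_eq, mem_inter_iff, mem_iInter, mem_setOf_eq]
  rw [h]
  exact (isClosed_iInter fun i =>
      ((isClosed_le continuous_const (continuous_apply i)).inter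
        (isClosed_le (continuous_apply i) continuous_const))).inter
    (isClosed_iInter fun i => isClosed_iInter fun j => isClosed_iInter fun _ =>
      isClosed_le (continuous_apply i) (continuous_apply j))

lemma closedSimplex_subset_box (m : ℕ) (u v : ℝ) :
    closedSimplex m u v ⊆ Set.pi Set.univ (fun _ : Fin m => Icc u v) := by
  intro t ht i _
  exact ⟨(ht.1 i).1, (ht.1 i).2⟩

lemma isCompact_closedSimplex (m : ℕ) (u v : ℝ) : IsCompact (closedSimplex m u v) :=
  IsCompact.of_isClosed_subset (isCompact_univ_pi fun _ => isCompact_Icc)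
    (isClosed_closedSimplex m u v) (closedSimplex_subset_box m u v)

lemma integrableOn_prod_simplex (m : ℕ) (u v : ℝ) (f : Fin m → ℝ → ℝ)
    (hf : ∀ i, ContinuousOn (f i) (Icc u v)) :
    IntegrableOn (fun t => ∏ i, f i (t i)) (closedSimplex m u v) := by
  refine ContinuousOn.integrableOn_compact (isCompact_closedSimplex m u v) ?_
  refine ContinuousOn.mono ?_ (closedSimplex_subset_box m u v)
  refine continuousOn_finset_prod _ fun i _ => ?_
  exact (hf i).comp (continuous_apply i).continuousOn (fun t ht => ht i (mem_univ i))

lemma volume_eval_eq_zero {m : ℕ} (i : Fin m) (b : ℝ) :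
    volume {t : Fin m → ℝ | t i = b} = 0 := by
  have h : {t : Fin m → ℝ | t i = b} =
      Set.pi Set.univ (fun k => if k = i then {b} else Set.univ) := by
    ext t
    simp only [mem_setOf_eq, mem_pi, mem_univ, forall_true_left]
    constructor
    · intro h k; by_cases hk : k = i <;> simp [hk, h]
    · intro h; have := h i; simpa using this
  rw [h, volume_pi_pi]
  refine Finset.prod_eq_zero (Finset.mem_univ i) ?_
  simp

def splitEquiv (n : ℕ) (j : Fin (n + 1)) : Fin (j : ℕ) ⊕ Fin (n - (j : ℕ)) ≃ Fin n :=
  finSumFinEquiv.trans (finCongr (by have := j.is_le; omega))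

lemma splitEquiv_inl (n : ℕ) (j : Fin (n + 1)) (k : Fin (j : ℕ)) :
    (splitEquiv n j (Sum.inl k) : ℕ) = (k : ℕ) := by
  simp [splitEquiv]

lemma splitEquiv_inr (n : ℕ) (j : Fin (n + 1)) (k : Fin (n - (j : ℕ))) :
    (splitEquiv n j (Sum.inr k) : ℕ) = (j : ℕ) + (k : ℕ) := by
  simp [splitEquiv]

noncomputable def splitMap (n : ℕ) (j : Fin (n + 1)) :
    ((Fin (j : ℕ) → ℝ) × (Fin (n - (j : ℕ)) → ℝ)) ≃ᵐ (Fin n → ℝ) :=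
  (MeasurableEquiv.sumPiEquivProdPi (fun _ => ℝ)).symm.trans
    (MeasurableEquiv.piCongrLeft (fun _ => ℝ) (splitEquiv n j))

lemma splitMap_measurePreserving (n : ℕ) (j : Fin (n + 1)) :
    MeasurePreserving (splitMap n j) volume volume :=
  (volume_measurePreserving_piCongrLeft (fun _ : Fin n => ℝ) (splitEquiv n j)).comp
    (volume_measurePreserving_sumPiEquivProdPi_symm
      (fun _ : Fin (j : ℕ) ⊕ Fin (n - (j : ℕ)) => ℝ))

lemma splitMap_apply_inl (n : ℕ) (j : Fin (n + 1)) (p : (Fin (j : ℕ) → ℝ) × (Fin (n - (j : ℕ)) → ℝ))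
    (k : Fin (j : ℕ)) : splitMap n j p (splitEquiv n j (Sum.inl k)) = p.1 k := by
  simpa [splitMap, MeasurableEquiv.trans_apply, MeasurableEquiv.coe_sumPiEquivProdPi_symm,
    MeasurableEquiv.piCongrLeft] using
      Equiv.piCongrLeft_sum_inl (fun _ : Fin n => ℝ) (splitEquiv n j) p.1 p.2 k

lemma splitMap_apply_inr (n : ℕ) (j : Fin (n + 1)) (p : (Fin (j : ℕ) → ℝ) × (Fin (n - (j : ℕ)) → ℝ))
    (k : Fin (n - (j : ℕ))) : splitMap n j p (splitEquiv n j (Sum.inr k)) = p.2 k := by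
  simpa [splitMap, MeasurableEquiv.trans_apply, MeasurableEquiv.coe_sumPiEquivProdPi_symm,
    MeasurableEquiv.piCongrLeft] using
      Equiv.piCongrLeft_sum_inr (fun _ : Fin n => ℝ) (splitEquiv n j) p.1 p.2 k

lemma splitMap_apply_lt (n : ℕ) (j : Fin (n + 1)) (p : (Fin (j : ℕ) → ℝ) × (Fin (n - (j : ℕ)) → ℝ))
    (i : Fin n) (h : (i : ℕ) < (j : ℕ)) : splitMap n j p i = p.1 ⟨i, h⟩ := by
  have hi : i = splitEquiv n j (Sum.inl ⟨i, h⟩) := by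
    apply Fin.ext; rw [splitEquiv_inl]
  conv_lhs => rw [hi]
  exact splitMap_apply_inl n j p ⟨i, h⟩

lemma splitMap_apply_ge (n : ℕ) (j : Fin (n + 1)) (p : (Fin (j : ℕ) → ℝ) × (Fin (n - (j : ℕ)) → ℝ))
    (i : Fin n) (h : (j : ℕ) ≤ (i : ℕ)) :
    splitMap n j p i = p.2 ⟨(i : ℕ) - (j : ℕ), by have := i.isLt; omega⟩ := by
  have hi : i = splitEquiv n j (Sum.inr ⟨(i : ℕ) - (j : ℕ), by have := i.isLt; omega⟩) := by
    apply Fin.ext; rw [splitEquiv_inr]; simp; omega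
  conv_lhs => rw [hi]
  exact splitMap_apply_inr n j p _

lemma splitMap_prod (n : ℕ) (j : Fin (n + 1)) (f : Fin n → ℝ → ℝ)
    (p : (Fin (j : ℕ) → ℝ) × (Fin (n - (j : ℕ)) → ℝ)) :
    ∏ i, f i (splitMap n j p i) =
      (∏ k, f (Fin.castLE (Fin.is_le j) k) (p.1 k)) *
        ∏ k : Fin (n - (j : ℕ)),
          f ⟨(j : ℕ) + (k : ℕ), by have := j.isLt; have := k.isLt; omega⟩ (p.2 k) := by
  rw [← Equiv.prod_comp (splitEquiv n j) (fun i => f i (splitMap n j p i)),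
    Fintype.prod_sum_type]
  congr 1
  · refine Finset.prod_congr rfl fun k _ => ?_
    rw [splitMap_apply_inl]
    congr 1
  · refine Finset.prod_congr rfl fun k _ => ?_
    rw [splitMap_apply_inr]
    congr 1

/-- Strict piece: `t i < b` for `i < j`, `b ≤ t i` for `i ≥ j`. -/
def Spiece (n : ℕ) (a b c : ℝ) (j : Fin (n + 1)) : Set (Fin n → ℝ) :=
  {t | t ∈ closedSimplex n a c ∧
    ∀ i : Fin n, ((i : ℕ) < (j : ℕ) → t i < b) ∧ ((j : ℕ) ≤ (i : ℕ) → b ≤ t i)}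

/-- Closed piece: `t i ≤ b` for `i < j`, `b ≤ t i` for `i ≥ j`. -/
def Tpiece (n : ℕ) (a b c : ℝ) (j : Fin (n + 1)) : Set (Fin n → ℝ) :=
  {t | t ∈ closedSimplex n a c ∧
    ∀ i : Fin n, ((i : ℕ) < (j : ℕ) → t i ≤ b) ∧ ((j : ℕ) ≤ (i : ℕ) → b ≤ t i)}

lemma Spiece_cover (n : ℕ) (a b c : ℝ) :
    closedSimplex n a c = ⋃ j : Fin (n + 1), Spiece n a b c j := by
  classical
  ext t
  simp only [mem_iUnion]
  constructor
  · intro ht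
    by_cases H : ∃ m : ℕ, ∃ h : m < n, b ≤ t ⟨m, h⟩
    · set m0 := Nat.find H with hm0
      obtain ⟨hm0n, hbm0⟩ := Nat.find_spec H
      refine ⟨⟨m0, by omega⟩, ht, fun i => ⟨fun hi => ?_, fun hi => ?_⟩⟩
      · by_contra hcon
        push_neg at hcon
        exact Nat.find_min H (m := (i : ℕ)) hi ⟨i.isLt, by simpa using hcon⟩
      · calc b ≤ t ⟨m0, hm0n⟩ := hbm0
          _ ≤ t i := ht.2 _ _ (by exact hi)
    · push_neg at H
      refine ⟨Fin.last n, ht, fun i => ⟨fun _ => ?_, fun hi => ?_⟩⟩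
      · have := H i i.isLt
        simpa using lt_of_not_ge (by simpa using this)
      · exfalso
        simp only [Fin.val_last] at hi
        exact absurd i.isLt (by omega)
  · rintro ⟨j, hj, -⟩
    exact hj

lemma Spiece_disjoint (n : ℕ) (a b c : ℝ) :
    Pairwise (Function.onFun Disjoint (Spiece n a b c)) := by
  have key : ∀ j k : Fin (n + 1), (j : ℕ) < (k : ℕ) →
      Disjoint (Spiece n a b c j) (Spiece n a b c k) := by
    intro j k hjk
    rw [Set.disjoint_left]
    rintro t ⟨-, hj⟩ ⟨-, hk⟩
    have hjn : (j : ℕ) < n := by have := k.isLt; omega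
    have h1 := (hj ⟨j, hjn⟩).2 (le_refl _)
    have h2 := (hk ⟨j, hjn⟩).1 hjk
    exact absurd h1 (not_le.mpr h2)
  intro j k hjk
  rcases lt_or_gt_of_ne (fun h => hjk (Fin.ext h) : (j : ℕ) ≠ (k : ℕ)) with h | h
  · exact key j k h
  · exact (key k j h).symm

lemma measurableSet_closedSimplex' (m : ℕ) (u v : ℝ) : MeasurableSet (closedSimplex m u v) := by
  have h : closedSimplex m u v =
      (⋂ i, ({t : Fin m → ℝ | u ≤ t i} ∩ {t | t i ≤ v})) ∩
      ⋂ i, ⋂ j, ⋂ (_ : i ≤ j), {t : Fin m → ℝ | t i ≤ t j} := by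
    ext t
    simp only [closedSimplex, mem_setOf_eq, mem_inter_iff, mem_iInter, mem_setOf_eq]
  rw [h]
  exact ((MeasurableSet.iInter fun i =>
      ((measurableSet_le measurable_const (measurable_pi_apply i)).inter
        (measurableSet_le (measurable_pi_apply i) measurable_const)))).inter
    (MeasurableSet.iInter fun i => MeasurableSet.iInter fun j => MeasurableSet.iInter fun _ =>
      measurableSet_le (measurable_pi_apply i) (measurable_pi_apply j))

lemma measurableSet_Spiece (n : ℕ) (a b c : ℝ) (j : Fin (n + 1)) :
    MeasurableSet (Spiece n a b c j) := by
  have h : Spiece n a b c j = closedSimplex n a c ∩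
      ⋂ i : Fin n, ({t : Fin n → ℝ | (i : ℕ) < (j : ℕ) → t i < b} ∩
        {t | (j : ℕ) ≤ (i : ℕ) → b ≤ t i}) := by
    ext t
    simp only [Spiece, mem_setOf_eq, mem_inter_iff, mem_iInter, mem_setOf_eq]
  rw [h]
  refine (measurableSet_closedSimplex' n a c).inter (MeasurableSet.iInter fun i => ?_)
  refine MeasurableSet.inter ?_ ?_
  · by_cases hij : (i : ℕ) < (j : ℕ)
    · simp only [hij, true_implies]
      exact measurableSet_lt (measurable_pi_apply i) measurable_const
    · simp only [hij, false_implies, setOf_true]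
      exact MeasurableSet.univ
  · by_cases hij : (j : ℕ) ≤ (i : ℕ)
    · simp only [hij, true_implies]
      exact measurableSet_le measurable_const (measurable_pi_apply i)
  

    · simp only [hij, false_implies, setOf_true]
      exact MeasurableSet.univ

lemma volume_eval_eq_zero' {m : ℕ} (i : Fin m) (b : ℝ) :
    volume {t : Fin m → ℝ | t i = b} = 0 := by
  have h : {t : Fin m → ℝ | t i = b} =
      Set.pi Set.univ (fun k => if k = i then {b} else Set.univ) := by
    ext t
    simp only [mem_setOf_eq, mem_pi, mem_univ, forall_true_left]
    constructor
    · intro h k; by_cases hk : k = i <;> simp [hk, h]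
    · intro h; have := h i; simpa using this
  rw [h, volume_pi_pi]
  refine Finset.prod_eq_zero (Finset.mem_univ i) ?_
  simp

lemma Spiece_ae_eq (n : ℕ) (a b c : ℝ) (j : Fin (n + 1)) :
    Spiece n a b c j =ᵐ[volume] Tpiece n a b c j := by
  have hsub : Spiece n a b c j ⊆ Tpiece n a b c j := by
    rintro t ⟨h1, h2⟩
    exact ⟨h1, fun i => ⟨fun hi => le_of_lt ((h2 i).1 hi), (h2 i).2⟩⟩
  have hdiff : Tpiece n a b c j \ Spiece n a b c j ⊆ ⋃ i : Fin n, {t | t i = b} := by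
    rintro t ⟨⟨h1, h2⟩, hns⟩
    by_contra hcon
    simp only [mem_iUnion, mem_setOf_eq, not_exists] at hcon
    exact hns ⟨h1, fun i =>
      ⟨fun hi => lt_of_le_of_ne ((h2 i).1 hi) (hcon i), (h2 i).2⟩⟩
  have hz : volume (⋃ i : Fin n, {t : Fin n → ℝ | t i = b}) = 0 :=
    measure_iUnion_null fun i => volume_eval_eq_zero' i b
  refine MeasureTheory.ae_eq_set.2 ⟨?_, measure_mono_null hdiff hz⟩
  rw [Set.diff_eq_empty.mpr hsub]
  exact measure_empty

lemma Tpiece_eq_image (n : ℕ) (a b c : ℝ) (hab : a ≤ b) (hbc : b ≤ c) (j : Fin (n + 1)) :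
    Tpiece n a b c j =
      splitMap n j '' (closedSimplex (j : ℕ) a b ×ˢ closedSimplex (n - (j : ℕ)) b c) := by
  have hjn : (j : ℕ) ≤ n := j.is_le
  ext t
  constructor
  · rintro ⟨⟨hbd, hmono⟩, hb⟩
    refine ⟨(fun k => t ⟨k, by have := k.isLt; omega⟩,
             fun k => t ⟨(j : ℕ) + (k : ℕ), by have := k.isLt; omega⟩), ⟨⟨?_, ?_⟩, ⟨?_, ?_⟩⟩, ?_⟩
    · intro k
      exact ⟨(hbd _).1, (hb ⟨k, by have := k.isLt; omega⟩).1 k.isLt⟩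
    · intro k l hkl
      exact hmono _ _ (show (k : ℕ) ≤ (l : ℕ) from hkl)
    · intro k
      exact ⟨(hb ⟨(j : ℕ) + (k : ℕ), by have := k.isLt; omega⟩).2 (by simp), (hbd _).2⟩
    · intro k l hkl
      have hkl' : (k : ℕ) ≤ (l : ℕ) := hkl
      exact hmono _ _ (show (j : ℕ) + (k : ℕ) ≤ (j : ℕ) + (l : ℕ) by omega)
    · funext i
      by_cases hij : (i : ℕ) < (j : ℕ)
      · rw [splitMap_apply_lt n j _ i hij]
      · rw [splitMap_apply_ge n j _ i (not_lt.mp hij)]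
        show t ⟨(j : ℕ) + ((i : ℕ) - (j : ℕ)), by have := i.isLt; omega⟩ = t i
        congr 1
        exact Fin.ext (by simp only [Fin.val_mk]; omega)
  · rintro ⟨⟨x, y⟩, ⟨⟨hxbd, hxm⟩, ⟨hybd, hym⟩⟩, rfl⟩
    have hlt : ∀ i : Fin n, (hi : (i : ℕ) < (j : ℕ)) →
        splitMap n j (x, y) i = x ⟨i, hi⟩ := fun i hi => splitMap_apply_lt n j (x, y) i hi
    have hge : ∀ i : Fin n, (hi : (j : ℕ) ≤ (i : ℕ)) →
        splitMap n j (x, y) i = y ⟨(i : ℕ) - (j : ℕ), by have := i.isLt; omega⟩ :=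
      fun i hi => splitMap_apply_ge n j (x, y) i hi
    have hbound : ∀ i : Fin n, a ≤ splitMap n j (x, y) i ∧ splitMap n j (x, y) i ≤ c := by
      intro i
      by_cases hij : (i : ℕ) < (j : ℕ)
      · rw [hlt i hij]
        exact ⟨(hxbd _).1, le_trans (hxbd _).2 hbc⟩
      · rw [hge i (not_lt.mp hij)]
        exact ⟨le_trans hab (hybd _).1, (hybd _).2⟩
    refine ⟨⟨hbound, ?_⟩, ?_⟩
    · intro i k hik
      have hik' : (i : ℕ) ≤ (k : ℕ) := hik
      by_cases hij : (i : ℕ) < (j : ℕ)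
      · by_cases hkj : (k : ℕ) < (j : ℕ)
        · rw [hlt i hij, hlt k hkj]
          exact hxm _ _ (show (i : ℕ) ≤ (k : ℕ) from hik')
        · rw [hlt i hij, hge k (not_lt.mp hkj)]
          exact le_trans (hxbd _).2 (hybd _).1
      · have hij' := not_lt.mp hij
        have hkj' : (j : ℕ) ≤ (k : ℕ) := le_trans hij' hik'
        rw [hge i hij', hge k hkj']
        exact hym _ _ (show (i : ℕ) - (j : ℕ) ≤ (k : ℕ) - (j : ℕ) by omega)
    · intro i
      constructor
      · intro hij
        rw [hlt i hij]
        exact (hxbd _).2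
      · intro hij
        rw [hge i hij]
        exact (hybd _).1


/-- Composition-of-paths formula for iterated integrals: for `a ≤ b ≤ c` and continuous
`f₁, …, f_n` on `[a,c]`,
`∫_{a≤t₁≤⋯≤t_n≤c} ∏ fᵢ(tᵢ) = Σ_{j=0}^{n} (∫_{a≤t₁≤⋯≤t_j≤b} ∏_{i≤j} fᵢ(tᵢ)) ·
(∫_{b≤t_{j+1}≤⋯≤t_n≤c} ∏_{i>j} fᵢ(tᵢ))`. -/
theorem stmt3 (n : ℕ) (a b c : ℝ) (hab : a ≤ b) (hbc : b ≤ c)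
    (f : Fin n → ℝ → ℝ) (hf : ∀ i, ContinuousOn (f i) (Set.Icc a c)) :
    iterInt n a c f =
      ∑ j : Fin (n + 1),
        iterInt j a b (fun i => f (Fin.castLE (Fin.is_le j) i)) *
          iterInt (n - j) b c
            (fun i => f ⟨(j : ℕ) + i, by have := i.isLt; have := j.isLt; omega⟩) := by
  have hint : IntegrableOn (fun t => ∏ i, f i (t i)) (closedSimplex n a c) :=
    integrableOn_prod_simplex n a c f hf
  rw [iterInt, Spiece_cover n a b c,
    integral_iUnion (fun j => measurableSet_Spiece n a b c j) (Spiece_disjoint n a b c)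
      (by rw [← Spiece_cover n a b c]; exact hint), tsum_fintype]
  refine Finset.sum_congr rfl fun j _ => ?_
  rw [setIntegral_congr_set (Spiece_ae_eq n a b c j),
    Tpiece_eq_image n a b c hab hbc j,
    (splitMap_measurePreserving n j).setIntegral_image_emb
      (splitMap n j).measurableEmbedding _ _]
  simp_rw [splitMap_prod n j f]
  rw [Measure.volume_eq_prod]
  exact setIntegral_prod_mul (fun y : Fin (j : ℕ) → ℝ => ∏ k, f (Fin.castLE (Fin.is_le j) k) (y k))
    (fun y : Fin (n - (j : ℕ)) → ℝ => ∏ k : Fin (n - (j : ℕ)),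
      f ⟨(j : ℕ) + (k : ℕ), by have := k.isLt; have := j.isLt; omega⟩ (y k))
    (closedSimplex (j : ℕ) a b) (closedSimplex (n - (j : ℕ)) b c)
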